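/- Let u : ℝ³ → ℝ be Euclidean C²-smooth and x a non-characteristic point of Σ = {u = 0}. Define for L > 0 the Gaussian curvature of Σ at x associated to the second Schouten–Van Kampen affine connection by K^{Σ,∇¹}(L) = h¹₁₁h¹₂₂ − h¹₁₂h¹₂₁, with q̄_L = q/l_L and h¹₁₁ = (l/l_L)(X₁(p̄)+X₂(q̄)) + (√L/2)p̄q̄r̄_L, h¹₁₂ = −(l_L/l)(q̄X₁(r̄_L) − p̄X₂(r̄_L)) − (√L/2)r̄_L²q̄² − (√L/2)(l/l_L)q̄q̄_L, h¹₂₁ = −(l_L/l)(q̄X₁(r̄_L) − p̄X₂(r̄_L)) − (√L/2) + (√L/2)(l²/l_L²) − (√L/2)r̄_L²q̄², h¹₂₂ = −(l²/l_L²)(r̄_L p̄ X₁(r/l) + r̄_L q̄ X₂(r/l)) + L^{−1/2}X₃(r̄_L) − (√L/2)(l/l_L)p̄q̄_L r̄_L − (√L/2)p̄q̄r̄_L³. Then K^{Σ,∇¹}(L) = K^{Σ,∇¹,∞} + O(L^{−1/2}) as L → +∞, i.e. there exist C ≥ 0 and L₀ > 0 such that |K^{Σ,∇¹}(L) − K^{Σ,∇¹,∞}|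 ≤ C·L^{−1/2} for all L ≥ L₀, where K^{Σ,∇¹,∞} = −(p̄q̄u_{x₃}/(2l))·(X₁(p̄)+X₂(q̄)) − (q̄²/2)·[ q̄X₁(u_{x₃}/l) − p̄X₂(u_{x₃}/l) + u_{x₃}²/l² ] (all quantities evaluated at x). -/

import Mathlib

set_option maxHeartbeats 1600000


open Filter Real Topology

/-- The horizontal vector field `X₁ = ∂_{x₁} - (x₂/2)∂_{x₃}` acting on a function. -/
noncomputable def X1 (f : ℝ → ℝ → ℝ → ℝ) (x y z : ℝ) : ℝ :=
  deriv (fun s => f s y z) x - (y / 2) * deriv (fun s => f x y s) z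

/-- The horizontal vector field `X₂ = ∂_{x₂} + (x₁/2)∂_{x₃}` acting on a function. -/
noncomputable def X2 (f : ℝ → ℝ → ℝ → ℝ) (x y z : ℝ) : ℝ :=
  deriv (fun s => f x s z) y + (x / 2) * deriv (fun s => f x y s) z

/-- The vertical vector field `X₃ = ∂_{x₃}` acting on a function. -/
noncomputable def X3 (f : ℝ → ℝ → ℝ → ℝ) (x y z : ℝ) : ℝ :=
  deriv (fun s => f x y s) z


lemma aux_quot {f g : ℝ → ℝ} {t F' G' : ℝ} (hf : HasDerivAt f F' t)
    (hg : HasDerivAt g G' t) (hgpos : 0 < g t) :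
    HasDerivAt (fun s => f s / Real.sqrt (g s))
      ((F' * g t - f t * (G' / 2)) / (Real.sqrt (g t))^3) t := by
  have hs : Real.sqrt (g t) ≠ 0 := ne_of_gt (Real.sqrt_pos.2 hgpos)
  have h : HasDerivAt (fun s => f s / Real.sqrt (g s)) _ t := hf.div (hg.sqrt (ne_of_gt hgpos)) hs
  convert h using 1
  have h2 : Real.sqrt (g t) ^ 2 = g t := Real.sq_sqrt hgpos.le
  field_simp
  linear_combination (-2*F') * h2

lemma partial_rep (u : ℝ → ℝ → ℝ → ℝ)
    (hud : Differentiable ℝ (fun v : ℝ × ℝ × ℝ => u v.1 v.2.1 v.2.2)) (a b c : ℝ) :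
    deriv (fun s => u s b c) a
        = fderiv ℝ (fun v : ℝ × ℝ × ℝ => u v.1 v.2.1 v.2.2) (a,b,c) (1,0,0)
      ∧ deriv (fun s => u a s c) b
        = fderiv ℝ (fun v : ℝ × ℝ × ℝ => u v.1 v.2.1 v.2.2) (a,b,c) (0,1,0)
      ∧ deriv (fun s => u a b s) c
        = fderiv ℝ (fun v : ℝ × ℝ × ℝ => u v.1 v.2.1 v.2.2) (a,b,c) (0,0,1) := by
  refine ⟨?_, ?_, ?_⟩
  · have hline : HasDerivAt (fun s : ℝ => ((s, b, c) : ℝ × ℝ × ℝ)) (1, 0, 0) a :=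
      (hasDerivAt_id a).prodMk ((hasDerivAt_const a b).prodMk (hasDerivAt_const a c))
    exact ((hud (a,b,c)).hasFDerivAt.comp_hasDerivAt a hline).deriv
  · have hline : HasDerivAt (fun s : ℝ => ((a, s, c) : ℝ × ℝ × ℝ)) (0, 1, 0) b :=
      (hasDerivAt_const b a).prodMk ((hasDerivAt_id b).prodMk (hasDerivAt_const b c))
    exact ((hud (a,b,c)).hasFDerivAt.comp_hasDerivAt b hline).deriv
  · have hline : HasDerivAt (fun s : ℝ => ((a, b, s) : ℝ × ℝ × ℝ)) (0, 0, 1) c :=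
      (hasDerivAt_const c a).prodMk ((hasDerivAt_const c b).prodMk (hasDerivAt_id c))
    exact ((hud (a,b,c)).hasFDerivAt.comp_hasDerivAt c hline).deriv

lemma X_rep (u : ℝ → ℝ → ℝ → ℝ)
    (hu : ContDiff ℝ 2 (fun v : ℝ × ℝ × ℝ => u v.1 v.2.1 v.2.2)) :
    ∃ P Q W : ℝ × ℝ × ℝ → ℝ,
      Differentiable ℝ P ∧ Differentiable ℝ Q ∧ Differentiable ℝ W ∧
      (∀ a b c, X1 u a b c = P (a,b,c)) ∧
      (∀ a b c, X2 u a b c = Q (a,b,c)) ∧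
      (∀ a b c, X3 u a b c = W (a,b,c)) := by
  have hud : Differentiable ℝ (fun v : ℝ × ℝ × ℝ => u v.1 v.2.1 v.2.2) :=
    hu.differentiable (by norm_num)
  have hfd : ContDiff ℝ 1 (fderiv ℝ (fun v : ℝ × ℝ × ℝ => u v.1 v.2.1 v.2.2)) :=
    hu.fderiv_right (by norm_num)
  have hD : ∀ e : ℝ × ℝ × ℝ,
      Differentiable ℝ (fun v => fderiv ℝ (fun v : ℝ × ℝ × ℝ => u v.1 v.2.1 v.2.2) v e) :=
    fun e => (hfd.clm_apply contDiff_const).differentiable one_ne_zero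
  refine ⟨fun v => fderiv ℝ (fun v : ℝ × ℝ × ℝ => u v.1 v.2.1 v.2.2) v (1,0,0)
        - (v.2.1/2) * fderiv ℝ (fun v : ℝ × ℝ × ℝ => u v.1 v.2.1 v.2.2) v (0,0,1),
      fun v => fderiv ℝ (fun v : ℝ × ℝ × ℝ => u v.1 v.2.1 v.2.2) v (0,1,0)
        + (v.1/2) * fderiv ℝ (fun v : ℝ × ℝ × ℝ => u v.1 v.2.1 v.2.2) v (0,0,1),
      fun v => fderiv ℝ (fun v : ℝ × ℝ × ℝ => u v.1 v.2.1 v.2.2) v (0,0,1),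
      ?_, ?_, ?_, ?_, ?_, ?_⟩
  · exact (hD _).sub ((by fun_prop : Differentiable ℝ fun v : ℝ × ℝ × ℝ => v.2.1/2).mul (hD _))
  · exact (hD _).add ((by fun_prop : Differentiable ℝ fun v : ℝ × ℝ × ℝ => v.1/2).mul (hD _))
  · exact hD _
  · intro a b c
    simp only [X1]
    rw [(partial_rep u hud a b c).1, (partial_rep u hud a b c).2.2]
  · intro a b c
    simp only [X2]
    rw [(partial_rep u hud a b c).2.1, (partial_rep u hud a b c).2.2]
  · intro a b c
    simp only [X3]
    rw [(partial_rep u hud a b c).2.2]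

noncomputable def muF (l0 w : ℝ) (s : ℝ) : ℝ := Real.sqrt (l0^2 + s^2*w^2)

noncomputable def F11F (l0 p q w A : ℝ) (s : ℝ) : ℝ :=
  (l0^3*A + p*q*w/2)/(l0^2 * muF l0 w s)

noncomputable def F22F (l0 p q w D1 D2 D3 : ℝ) (s : ℝ) : ℝ :=
  (s^2*(l0^2*D3 - w*(p*D1+q*D2)) - p*q*w*l0^2/2 - s^2*p*q*w^3/2)/(l0^2*(muF l0 w s)^3)

noncomputable def JF (l0 p q w D1 D2 : ℝ) (s : ℝ) : ℝ :=
  (-(q*D1-p*D2) - w^2*q^2/2)/(l0^2*(muF l0 w s)^2)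

noncomputable def HF (l0 p q w D1 D2 : ℝ) (s : ℝ) : ℝ :=
  (-(q*D1-p*D2) - w^2*q^2/2 - w^2*l0^2/2)/(l0^2*(muF l0 w s)^2)

noncomputable def FF (l0 p q w A D1 D2 D3 : ℝ) (s : ℝ) : ℝ :=
  F11F l0 p q w A s * F22F l0 p q w D1 D2 D3 s
    - s^2 * JF l0 p q w D1 D2 s * HF l0 p q w D1 D2 s
    + q^2 * HF l0 p q w D1 D2 s / (2*(muF l0 w s)^2)

lemma muF_arg_pos {l0 : ℝ} (hl0 : l0 ≠ 0) (w s : ℝ) : 0 < l0^2 + s^2*w^2 := by positivity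

lemma muF_pos {l0 : ℝ} (hl0 : l0 ≠ 0) (w s : ℝ) : 0 < muF l0 w s :=
  Real.sqrt_pos.2 (muF_arg_pos hl0 w s)

lemma muF_sq {l0 : ℝ} (hl0 : l0 ≠ 0) (w s : ℝ) : (muF l0 w s)^2 = l0^2 + s^2*w^2 :=
  Real.sq_sqrt (muF_arg_pos hl0 w s).le

lemma muF_contDiff {l0 : ℝ} (hl0 : l0 ≠ 0) (w : ℝ) : ContDiff ℝ 1 (muF l0 w) := by
  rw [contDiff_iff_contDiffAt]
  intro s
  exact (Real.contDiffAt_sqrt (muF_arg_pos hl0 w s).ne').comp s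
    ((contDiff_const.add ((contDiff_id.pow 2).mul contDiff_const)).contDiffAt)

lemma FF_contDiff {l0 : ℝ} (hl0 : l0 ≠ 0) (p q w A D1 D2 D3 : ℝ) :
    ContDiff ℝ 1 (FF l0 p q w A D1 D2 D3) := by
  have hμ := muF_contDiff hl0 w
  have hμne : ∀ s, muF l0 w s ≠ 0 := fun s => (muF_pos hl0 w s).ne'
  have h11 : ContDiff ℝ 1 (F11F l0 p q w A) :=
    contDiff_const.div (contDiff_const.mul hμ)
      (fun s => mul_ne_zero (pow_ne_zero 2 hl0) (hμne s))
  have h22 : ContDiff ℝ 1 (F22F l0 p q w D1 D2 D3) := by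
    refine ContDiff.div ?_ (contDiff_const.mul (hμ.pow 3))
      (fun s => mul_ne_zero (pow_ne_zero 2 hl0) (pow_ne_zero 3 (hμne s)))
    exact (((contDiff_id.pow 2).mul contDiff_const).sub contDiff_const).sub
      (((((contDiff_id.pow 2).mul contDiff_const).mul contDiff_const).mul
        contDiff_const).div_const 2)
  have hJ : ContDiff ℝ 1 (JF l0 p q w D1 D2) :=
    contDiff_const.div (contDiff_const.mul (hμ.pow 2))
      (fun s => mul_ne_zero (pow_ne_zero 2 hl0) (pow_ne_zero 2 (hμne s)))
  have hH : ContDiff ℝ 1 (HF l0 p q w D1 D2) :=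
    contDiff_const.div (contDiff_const.mul (hμ.pow 2))
      (fun s => mul_ne_zero (pow_ne_zero 2 hl0) (pow_ne_zero 2 (hμne s)))
  exact ((h11.mul h22).sub (((contDiff_id.pow 2).mul hJ).mul hH)).add
    ((contDiff_const.mul hH).div (contDiff_const.mul (hμ.pow 2))
      (fun s => mul_ne_zero two_ne_zero (pow_ne_zero 2 (hμne s))))

lemma bound_from_F (F : ℝ → ℝ) (hF : ContDiff ℝ 1 F) :
    ∃ C : ℝ, 0 ≤ C ∧ ∀ s ∈ Set.Icc (0:ℝ) 1, |F s - F 0| ≤ C * s := by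
  obtain ⟨C, hC⟩ := (isCompact_Icc (a := (0:ℝ)) (b := 1)).exists_bound_of_continuousOn
    ((hF.continuous_deriv le_rfl).continuousOn)
  have hC0 : 0 ≤ C := le_trans (norm_nonneg _) (hC 0 ⟨le_rfl, zero_le_one⟩)
  refine ⟨C, hC0, fun s hs => ?_⟩
  have := Convex.norm_image_sub_le_of_norm_deriv_le
    (f := F) (s := Set.Icc (0:ℝ) 1)
    (fun t _ => (hF.differentiable one_ne_zero) t) hC (convex_Icc 0 1)
    (Set.left_mem_Icc.2 zero_le_one) hs
  rw [Real.norm_eq_abs, Real.norm_eq_abs, sub_zero] at this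
  calc |F s - F 0| ≤ C * |s| := this
    _ = C * s := by rw [abs_of_nonneg hs.1]
theorem gaussian_curvature_expansion_second_SvK
    (u pb qb uol : ℝ → ℝ → ℝ → ℝ) (rbF rol : ℝ → ℝ → ℝ → ℝ → ℝ)
    (lL qbL h11 h12 h21 h22 K : ℝ → ℝ) (l0 Kinf x y z : ℝ)
    (hu : ContDiff ℝ 2 (fun v : ℝ × ℝ × ℝ => u v.1 v.2.1 v.2.2))
    (hx : u x y z = 0)
    (hl0 : l0 = Real.sqrt ((X1 u x y z)^2 + (X2 u x y z)^2))
    (hnc : l0 ≠ 0)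
    (hpb : ∀ a b c, pb a b c = X1 u a b c / Real.sqrt ((X1 u a b c)^2 + (X2 u a b c)^2))
    (hqb : ∀ a b c, qb a b c = X2 u a b c / Real.sqrt ((X1 u a b c)^2 + (X2 u a b c)^2))
    (huol : ∀ a b c, uol a b c = X3 u a b c / Real.sqrt ((X1 u a b c)^2 + (X2 u a b c)^2))
    (hrbF : ∀ L a b c, rbF L a b c = (X3 u a b c / Real.sqrt L) /
      Real.sqrt ((X1 u a b c)^2 + (X2 u a b c)^2 + (X3 u a b c / Real.sqrt L)^2))
    (hrol : ∀ L a b c, rol L a b c = (X3 u a b c / Real.sqrt L) /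
      Real.sqrt ((X1 u a b c)^2 + (X2 u a b c)^2))
    (hlL : ∀ L, lL L = Real.sqrt ((X1 u x y z)^2 + (X2 u x y z)^2
      + (X3 u x y z / Real.sqrt L)^2))
    (hqbL : ∀ L, qbL L = X2 u x y z / lL L)
    (hh11 : ∀ L, h11 L = (l0 / lL L) * (X1 pb x y z + X2 qb x y z)
      + (Real.sqrt L / 2) * pb x y z * qb x y z * rbF L x y z)
    (hh12 : ∀ L, h12 L = -(lL L / l0) * (qb x y z * X1 (rbF L) x y z
      - pb x y z * X2 (rbF L) x y z)
      - (Real.sqrt L / 2) * (rbF L x y z)^2 * (qb x y z)^2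
      - (Real.sqrt L / 2) * (l0 / lL L) * qb x y z * qbL L)
    (hh21 : ∀ L, h21 L = -(lL L / l0) * (qb x y z * X1 (rbF L) x y z
      - pb x y z * X2 (rbF L) x y z) - Real.sqrt L / 2
      + (Real.sqrt L / 2) * (l0^2 / (lL L)^2)
      - (Real.sqrt L / 2) * (rbF L x y z)^2 * (qb x y z)^2)
    (hh22 : ∀ L, h22 L = -(l0^2 / (lL L)^2) * (rbF L x y z * pb x y z * X1 (rol L) x y z
      + rbF L x y z * qb x y z * X2 (rol L) x y z)
      + (1 / Real.sqrt L) * X3 (rbF L) x y z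
      - (Real.sqrt L / 2) * (l0 / lL L) * pb x y z * qbL L * rbF L x y z
      - (Real.sqrt L / 2) * pb x y z * qb x y z * (rbF L x y z)^3)
    (hK : ∀ L, K L = h11 L * h22 L - h12 L * h21 L)
    (hKinf : Kinf = -(pb x y z * qb x y z * X3 u x y z / (2 * l0))
        * (X1 pb x y z + X2 qb x y z)
      - ((qb x y z)^2 / 2) * (qb x y z * X1 uol x y z - pb x y z * X2 uol x y z
        + (X3 u x y z)^2 / l0^2)) :
    ∃ C : ℝ, 0 ≤ C ∧ ∃ L₀ : ℝ, 0 < L₀ ∧ ∀ L : ℝ, L₀ ≤ L →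
      |K L - Kinf| ≤ C / Real.sqrt L := by
  obtain ⟨P, Q, W, hPd, hQd, hWd, hXP, hXQ, hXW⟩ := X_rep u hu
  set p := X1 u x y z with hp
  set q := X2 u x y z with hq
  set w := X3 u x y z with hw
  -- basic positivity
  have hgx : 0 < p^2 + q^2 := by
    rcases lt_or_eq_of_le (by positivity : (0:ℝ) ≤ p^2+q^2) with h | h
    · exact h
    · exact absurd (by rw [hl0, ← h, Real.sqrt_zero]) hnc
  have hl : Real.sqrt (p^2+q^2) = l0 := hl0.symm
  have hl0pos : 0 < l0 := by rw [← hl]; exact Real.sqrt_pos.2 hgx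
  have hl2 : l0^2 = p^2 + q^2 := by rw [← hl, Real.sq_sqrt hgx.le]
  -- line derivative facts for P, Q, W restricted to coordinate lines
  have lineD1 : ∀ f : ℝ × ℝ × ℝ → ℝ, Differentiable ℝ f →
      HasDerivAt (fun a => f (a, y, z)) (deriv (fun a => f (a, y, z)) x) x := by
    intro f hf
    exact (((hf (x,y,z)).comp x (differentiableAt_id.prodMk
      ((differentiableAt_const _).prodMk (differentiableAt_const _))))).hasDerivAt
  have lineD2 : ∀ f : ℝ × ℝ × ℝ → ℝ, Differentiable ℝ f →
      HasDerivAt (fun b => f (x, b, z)) (deriv (fun b => f (x, b, z)) y) y := by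
    intro f hf
    exact (((hf (x,y,z)).comp y ((differentiableAt_const _).prodMk
      (differentiableAt_id.prodMk (differentiableAt_const _))))).hasDerivAt
  have lineD3 : ∀ f : ℝ × ℝ × ℝ → ℝ, Differentiable ℝ f →
      HasDerivAt (fun c => f (x, y, c)) (deriv (fun c => f (x, y, c)) z) z := by
    intro f hf
    exact (((hf (x,y,z)).comp z ((differentiableAt_const _).prodMk
      ((differentiableAt_const _).prodMk differentiableAt_id)))).hasDerivAt
  -- names for the nine partial derivatives
  set P1 := deriv (fun a => P (a, y, z)) x with hP1
  set P2 := deriv (fun b => P (x, b, z)) y with hP2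
  set P3 := deriv (fun c => P (x, y, c)) z with hP3
  set Q1 := deriv (fun a => Q (a, y, z)) x with hQ1
  set Q2 := deriv (fun b => Q (x, b, z)) y with hQ2
  set Q3 := deriv (fun c => Q (x, y, c)) z with hQ3
  set W1 := deriv (fun a => W (a, y, z)) x with hW1
  set W2 := deriv (fun b => W (x, b, z)) y with hW2
  set W3 := deriv (fun c => W (x, y, c)) z with hW3
  have hp1 : HasDerivAt (fun a => X1 u a y z) P1 x := by
    have e : (fun a => X1 u a y z) = fun a => P (a, y, z) := funext fun a => hXP a y z
    rw [e]; exact lineD1 P hPd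
  have hp2 : HasDerivAt (fun b => X1 u x b z) P2 y := by
    have e : (fun b => X1 u x b z) = fun b => P (x, b, z) := funext fun b => hXP x b z
    rw [e]; exact lineD2 P hPd
  have hp3 : HasDerivAt (fun c => X1 u x y c) P3 z := by
    have e : (fun c => X1 u x y c) = fun c => P (x, y, c) := funext fun c => hXP x y c
    rw [e]; exact lineD3 P hPd
  have hq1 : HasDerivAt (fun a => X2 u a y z) Q1 x := by
    have e : (fun a => X2 u a y z) = fun a => Q (a, y, z) := funext fun a => hXQ a y z
    rw [e]; exact lineD1 Q hQd
  have hq2 : HasDerivAt (fun b => X2 u x b z) Q2 y := by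
    have e : (fun b => X2 u x b z) = fun b => Q (x, b, z) := funext fun b => hXQ x b z
    rw [e]; exact lineD2 Q hQd
  have hq3 : HasDerivAt (fun c => X2 u x y c) Q3 z := by
    have e : (fun c => X2 u x y c) = fun c => Q (x, y, c) := funext fun c => hXQ x y c
    rw [e]; exact lineD3 Q hQd
  have hw1 : HasDerivAt (fun a => X3 u a y z) W1 x := by
    have e : (fun a => X3 u a y z) = fun a => W (a, y, z) := funext fun a => hXW a y z
    rw [e]; exact lineD1 W hWd
  have hw2 : HasDerivAt (fun b => X3 u x b z) W2 y := by
    have e : (fun b => X3 u x b z) = fun b => W (x, b, z) := funext fun b => hXW x b z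
    rw [e]; exact lineD2 W hWd
  have hw3 : HasDerivAt (fun c => X3 u x y c) W3 z := by
    have e : (fun c => X3 u x y c) = fun c => W (x, y, c) := funext fun c => hXW x y c
    rw [e]; exact lineD3 W hWd
  -- compound constants
  set D1 : ℝ := (p^2+q^2)*(W1 - y/2*W3) - w*(p*(P1 - y/2*P3) + q*(Q1 - y/2*Q3)) with hD1
  set D2 : ℝ := (p^2+q^2)*(W2 + x/2*W3) - w*(p*(P2 + x/2*P3) + q*(Q2 + x/2*Q3)) with hD2
  set D3 : ℝ := (p^2+q^2)*W3 - w*(p*P3 + q*Q3) with hD3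
  set A : ℝ := X1 pb x y z + X2 qb x y z with hA
  -- derivatives of uol along coordinate lines
  have huol1 : HasDerivAt (fun a => uol a y z)
      ((W1*(p^2+q^2) - w*((2*p*P1+2*q*Q1)/2))/(Real.sqrt (p^2+q^2))^3) x := by
    have e : (fun a => uol a y z) = fun a => (X3 u a y z) /
        Real.sqrt ((X1 u a y z)^2 + (X2 u a y z)^2) := funext fun a => huol a y z
    rw [e]
    have hg : HasDerivAt (fun a => (X1 u a y z)^2 + (X2 u a y z)^2) (2*p*P1+2*q*Q1) x := by
      convert (show HasDerivAt (fun a => (X1 u a y z)^2 + (X2 u a y z)^2) _ x from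
        (hp1.pow 2).add (hq1.pow 2)) using 1
      push_cast; ring
    exact aux_quot hw1 hg hgx
  have huol2 : HasDerivAt (fun b => uol x b z)
      ((W2*(p^2+q^2) - w*((2*p*P2+2*q*Q2)/2))/(Real.sqrt (p^2+q^2))^3) y := by
    have e : (fun b => uol x b z) = fun b => (X3 u x b z) /
        Real.sqrt ((X1 u x b z)^2 + (X2 u x b z)^2) := funext fun b => huol x b z
    rw [e]
    have hg : HasDerivAt (fun b => (X1 u x b z)^2 + (X2 u x b z)^2) (2*p*P2+2*q*Q2) y := by
      convert (show HasDerivAt (fun b => (X1 u x b z)^2 + (X2 u x b z)^2) _ y from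
        (hp2.pow 2).add (hq2.pow 2)) using 1
      push_cast; ring
    exact aux_quot hw2 hg hgx
  have huol3 : HasDerivAt (fun c => uol x y c)
      ((W3*(p^2+q^2) - w*((2*p*P3+2*q*Q3)/2))/(Real.sqrt (p^2+q^2))^3) z := by
    have e : (fun c => uol x y c) = fun c => (X3 u x y c) /
        Real.sqrt ((X1 u x y c)^2 + (X2 u x y c)^2) := funext fun c => huol x y c
    rw [e]
    have hg : HasDerivAt (fun c => (X1 u x y c)^2 + (X2 u x y c)^2) (2*p*P3+2*q*Q3) z := by
      convert (show HasDerivAt (fun c => (X1 u x y c)^2 + (X2 u x y c)^2) _ z from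
        (hp3.pow 2).add (hq3.pow 2)) using 1
      push_cast; ring
    exact aux_quot hw3 hg hgx
  have hXuol1 : X1 uol x y z = D1 / l0^3 := by
    simp only [X1]
    rw [huol1.deriv, huol3.deriv, hl, hD1]
    field_simp
    ring
  have hXuol2 : X2 uol x y z = D2 / l0^3 := by
    simp only [X2]
    rw [huol2.deriv, huol3.deriv, hl, hD2]
    field_simp
    ring

  -- value facts at the point
  have hpbv : pb x y z = p / l0 := by rw [hpb, ← hp, ← hq, hl]
  have hqbv : qb x y z = q / l0 := by rw [hqb, ← hp, ← hq, hl]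
  -- the limit value
  have hμ0 : muF l0 w 0 = l0 := by
    simp [muF, Real.sqrt_sq hl0pos.le]
  have hF0 : FF l0 p q w A D1 D2 D3 0 = Kinf := by
    rw [hKinf, hXuol1, hXuol2, hpbv, hqbv]
    simp only [FF, F11F, F22F, JF, HF, hμ0]
    clear_value p q w P1 P2 P3 Q1 Q2 Q3 W1 W2 W3 D1 D2 D3 A
    field_simp
    linear_combination (l0^2*q^2*w^2) * hl2
  -- identification of K L with FF for large L
  have hKF : ∀ L : ℝ, 1 ≤ L → K L = FF l0 p q w A D1 D2 D3 (Real.sqrt L)⁻¹ := by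
    intro L hL1
    have hLpos : 0 < L := lt_of_lt_of_le one_pos hL1
    have hsLpos : 0 < Real.sqrt L := Real.sqrt_pos.2 hLpos
    set s : ℝ := (Real.sqrt L)⁻¹ with hs
    have hspos : 0 < s := by positivity
    have hsinv : Real.sqrt L = s⁻¹ := by rw [hs, inv_inv]
    have hs2 : s^2 * w^2 = (w / Real.sqrt L)^2 := by
      rw [hs]; field_simp
    have hMs : Real.sqrt (p^2 + q^2 + (w / Real.sqrt L)^2) = muF l0 w s := by
      simp only [muF]
      congr 1
      rw [hl2, hs2]
    have hMv : lL L = muF l0 w s := by rw [hlL, hMs]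
    have hmsq : (muF l0 w s)^2 = l0^2 + s^2*w^2 := muF_sq hl0pos.ne' w s
    have hμspos : 0 < muF l0 w s := muF_pos hl0pos.ne' w s
    have hgL : 0 < p^2 + q^2 + (w / Real.sqrt L)^2 :=
      lt_of_lt_of_le hgx (le_add_of_nonneg_right (sq_nonneg _))
    -- derivatives of rbF L along coordinate lines
    have hrb1 : HasDerivAt (fun a => rbF L a y z)
        (((W1 / Real.sqrt L) * (p^2+q^2+(w/Real.sqrt L)^2)
          - (w/Real.sqrt L) * ((2*p*P1 + 2*q*Q1 + 2*(w/Real.sqrt L)*(W1/Real.sqrt L))/2))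
          / (Real.sqrt (p^2+q^2+(w/Real.sqrt L)^2))^3) x := by
      have e : (fun a => rbF L a y z) = fun a => (X3 u a y z / Real.sqrt L) /
          Real.sqrt ((X1 u a y z)^2 + (X2 u a y z)^2 + (X3 u a y z / Real.sqrt L)^2) :=
        funext fun a => hrbF L a y z
      rw [e]
      have hg : HasDerivAt
          (fun a => (X1 u a y z)^2 + (X2 u a y z)^2 + (X3 u a y z / Real.sqrt L)^2)
          (2*p*P1 + 2*q*Q1 + 2*(w/Real.sqrt L)*(W1/Real.sqrt L)) x := by
        convert (show HasDerivAt
            (fun a => (X1 u a y z)^2 + (X2 u a y z)^2 + (X3 u a y z / Real.sqrt L)^2) _ x from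
          ((hp1.pow 2).add (hq1.pow 2)).add ((hw1.div_const _).pow 2)) using 1
        push_cast; ring
      exact aux_quot (hw1.div_const _) hg hgL
    have hrb2 : HasDerivAt (fun b => rbF L x b z)
        (((W2 / Real.sqrt L) * (p^2+q^2+(w/Real.sqrt L)^2)
          - (w/Real.sqrt L) * ((2*p*P2 + 2*q*Q2 + 2*(w/Real.sqrt L)*(W2/Real.sqrt L))/2))
          / (Real.sqrt (p^2+q^2+(w/Real.sqrt L)^2))^3) y := by
      have e : (fun b => rbF L x b z) = fun b => (X3 u x b z / Real.sqrt L) /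
          Real.sqrt ((X1 u x b z)^2 + (X2 u x b z)^2 + (X3 u x b z / Real.sqrt L)^2) :=
        funext fun b => hrbF L x b z
      rw [e]
      have hg : HasDerivAt
          (fun b => (X1 u x b z)^2 + (X2 u x b z)^2 + (X3 u x b z / Real.sqrt L)^2)
          (2*p*P2 + 2*q*Q2 + 2*(w/Real.sqrt L)*(W2/Real.sqrt L)) y := by
        convert (show HasDerivAt
            (fun b => (X1 u x b z)^2 + (X2 u x b z)^2 + (X3 u x b z / Real.sqrt L)^2) _ y from
          ((hp2.pow 2).add (hq2.pow 2)).add ((hw2.div_const _).pow 2)) using 1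
        push_cast; ring
      exact aux_quot (hw2.div_const _) hg hgL
    have hrb3 : HasDerivAt (fun c => rbF L x y c)
        (((W3 / Real.sqrt L) * (p^2+q^2+(w/Real.sqrt L)^2)
          - (w/Real.sqrt L) * ((2*p*P3 + 2*q*Q3 + 2*(w/Real.sqrt L)*(W3/Real.sqrt L))/2))
          / (Real.sqrt (p^2+q^2+(w/Real.sqrt L)^2))^3) z := by
      have e : (fun c => rbF L x y c) = fun c => (X3 u x y c / Real.sqrt L) /
          Real.sqrt ((X1 u x y c)^2 + (X2 u x y c)^2 + (X3 u x y c / Real.sqrt L)^2) :=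
        funext fun c => hrbF L x y c
      rw [e]
      have hg : HasDerivAt
          (fun c => (X1 u x y c)^2 + (X2 u x y c)^2 + (X3 u x y c / Real.sqrt L)^2)
          (2*p*P3 + 2*q*Q3 + 2*(w/Real.sqrt L)*(W3/Real.sqrt L)) z := by
        convert (show HasDerivAt
            (fun c => (X1 u x y c)^2 + (X2 u x y c)^2 + (X3 u x y c / Real.sqrt L)^2) _ z from
          ((hp3.pow 2).add (hq3.pow 2)).add ((hw3.div_const _).pow 2)) using 1
        push_cast; ring
      exact aux_quot (hw3.div_const _) hg hgL
    have hXrb1 : X1 (rbF L) x y z = s * D1 / (muF l0 w s)^3 := by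
      simp only [X1]
      rw [hrb1.deriv, hrb3.deriv, hMs, hsinv, hD1]
      clear_value s p q w P1 P2 P3 Q1 Q2 Q3 W1 W2 W3 D1 D2 D3 A
      field_simp [hspos.ne', hμspos.ne']
      ring
    have hXrb2 : X2 (rbF L) x y z = s * D2 / (muF l0 w s)^3 := by
      simp only [X2]
      rw [hrb2.deriv, hrb3.deriv, hMs, hsinv, hD2]
      clear_value s p q w P1 P2 P3 Q1 Q2 Q3 W1 W2 W3 D1 D2 D3 A
      field_simp [hspos.ne', hμspos.ne']
      ring
    have hXrb3 : X3 (rbF L) x y z = s * D3 / (muF l0 w s)^3 := by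
      simp only [X3]
      rw [hrb3.deriv, hMs, hsinv, hD3]
      clear_value s p q w P1 P2 P3 Q1 Q2 Q3 W1 W2 W3 D1 D2 D3 A
      field_simp [hspos.ne', hμspos.ne']
      ring
    -- rol is uol rescaled
    have hroluol : ∀ a b c, rol L a b c = uol a b c * s := by
      intro a b c
      rw [hrol, huol, hsinv]
      field_simp
    have hXrol1 : X1 (rol L) x y z = (D1 / l0^3) * s := by
      simp only [X1, hroluol]
      rw [deriv_mul_const huol1.differentiableAt, deriv_mul_const huol3.differentiableAt,
        huol1.deriv, huol3.deriv, hl, hD1]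
      clear_value s p q w P1 P2 P3 Q1 Q2 Q3 W1 W2 W3 D1 D2 D3 A
      field_simp [hspos.ne', hl0pos.ne']
      ring
    have hXrol2 : X2 (rol L) x y z = (D2 / l0^3) * s := by
      simp only [X2, hroluol]
      rw [deriv_mul_const huol2.differentiableAt, deriv_mul_const huol3.differentiableAt,
        huol2.deriv, huol3.deriv, hl, hD2]
      clear_value s p q w P1 P2 P3 Q1 Q2 Q3 W1 W2 W3 D1 D2 D3 A
      field_simp [hspos.ne', hl0pos.ne']
      ring
    -- point values
    have hrbv : rbF L x y z = w * s / muF l0 w s := by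
      rw [hrbF, ← hp, ← hq, ← hw, hMs, hsinv]
      field_simp
    have hqblv : qbL L = q / muF l0 w s := by rw [hqbL, hMv]
    -- per-entry identities
    have hH11 : h11 L = F11F l0 p q w A s := by
      rw [hh11, hMv, hpbv, hqbv, hrbv, hsinv]
      simp only [F11F]
      clear_value s p q w P1 P2 P3 Q1 Q2 Q3 W1 W2 W3 D1 D2 D3 A
      field_simp [hspos.ne', hμspos.ne', hl0pos.ne']
    have hH12 : h12 L = s * JF l0 p q w D1 D2 s - q^2/(2*s*(muF l0 w s)^2) := by
      rw [hh12, hMv, hpbv, hqbv, hrbv, hqblv, hXrb1, hXrb2, hsinv]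
      simp only [JF]
      clear_value s p q w P1 P2 P3 Q1 Q2 Q3 W1 W2 W3 D1 D2 D3 A
      field_simp [hspos.ne', hμspos.ne', hl0pos.ne']
    have hH21 : h21 L = s * HF l0 p q w D1 D2 s := by
      rw [hh21, hMv, hpbv, hqbv, hrbv, hXrb1, hXrb2, hsinv]
      simp only [HF]
      clear_value s p q w P1 P2 P3 Q1 Q2 Q3 W1 W2 W3 D1 D2 D3 A
      field_simp [hspos.ne', hμspos.ne', hl0pos.ne']
      linear_combination (-l0^2) * hmsq
    have hH22 : h22 L = F22F l0 p q w D1 D2 D3 s := by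
      rw [hh22, hMv, hpbv, hqbv, hrbv, hqblv, hXrol1, hXrol2, hXrb3, hsinv]
      simp only [F22F]
      clear_value s p q w P1 P2 P3 Q1 Q2 Q3 W1 W2 W3 D1 D2 D3 A
      field_simp [hspos.ne', hμspos.ne', hl0pos.ne']
      ring
    rw [hK, hH11, hH12, hH21, hH22]
    simp only [FF]
    clear_value s p q w P1 P2 P3 Q1 Q2 Q3 W1 W2 W3 D1 D2 D3 A
    field_simp [hspos.ne', hμspos.ne', hl0pos.ne']
    ring
  -- final assembly
  obtain ⟨C, hC0, hCb⟩ := bound_from_F _ (FF_contDiff hl0pos.ne' p q w A D1 D2 D3)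
  refine ⟨C, hC0, 1, one_pos, fun L hL => ?_⟩
  have hsL1 : (1:ℝ) ≤ Real.sqrt L := by
    rw [show (1:ℝ) = Real.sqrt 1 by simp]
    exact Real.sqrt_le_sqrt hL
  have hsLpos : 0 < Real.sqrt L := lt_of_lt_of_le one_pos hsL1
  have hmem : (Real.sqrt L)⁻¹ ∈ Set.Icc (0:ℝ) 1 :=
    ⟨by positivity, inv_le_one_of_one_le₀ hsL1⟩
  have hb := hCb _ hmem
  rw [hKF L hL, ← hF0]
  calc |FF l0 p q w A D1 D2 D3 (Real.sqrt L)⁻¹ - FF l0 p q w A D1 D2 D3 0|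
      ≤ C * (Real.sqrt L)⁻¹ := hb
    _ = C / Real.sqrt L := (div_eq_mul_inv _ _).symm
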